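/- Let G be a connected graph with a 2-join having split (X1, X2, A1, B1, A2, B2), let (T, r) be a BFS-tree of G with root r ∈ X2, and suppose T contains no edge between A1 and A2. Let a ∈ A1, let P be the path in T from r to a, let b2 ∈ B2 and b1 ∈ B1 be the consecutive vertices of P in B2 and B1 respectively, and let u be the child of b1 on P. Then every descendant of u in T (including u) belongs to X1. -/

import Mathlib

open SimpleGraph Set

/-- `(X1, X2, A1, B1, A2, B2)` is a split of a 2-join of `G`. -/
def IsTwoJoinSplit {V : Type*} (G : SimpleGraph V) (X1 X2 A1 B1 A2 B2 : Set V) : Prop :=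
  X1 ∪ X2 = Set.univ ∧ Disjoint X1 X2 ∧
  A1 ⊆ X1 ∧ B1 ⊆ X1 ∧ A2 ⊆ X2 ∧ B2 ⊆ X2 ∧
  Disjoint A1 B1 ∧ Disjoint A2 B2 ∧
  A1.Nonempty ∧ B1.Nonempty ∧ A2.Nonempty ∧ B2.Nonempty ∧
  (∀ a1 ∈ A1, ∀ a2 ∈ A2, G.Adj a1 a2) ∧
  (∀ b1 ∈ B1, ∀ b2 ∈ B2, G.Adj b1 b2) ∧
  (∀ x ∈ X1, ∀ y ∈ X2, G.Adj x y → (x ∈ A1 ∧ y ∈ A2) ∨ (x ∈ B1 ∧ y ∈ B2)) ∧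
  3 ≤ X1.ncard ∧ 3 ≤ X2.ncard

/-- `(X1, X2)` is a 2-join of `G`. -/
def IsTwoJoin {V : Type*} (G : SimpleGraph V) (X1 X2 : Set V) : Prop :=
  ∃ A1 B1 A2 B2, IsTwoJoinSplit G X1 X2 A1 B1 A2 B2

/-- `(a1, a2, b1, b2)` is a proper 4-tuple of `G`. -/
def ProperQuad {V : Type*} (G : SimpleGraph V) (a1 a2 b1 b2 : V) : Prop :=
  a1 ≠ a2 ∧ a1 ≠ b1 ∧ a1 ≠ b2 ∧ a2 ≠ b1 ∧ a2 ≠ b2 ∧ b1 ≠ b2 ∧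
  G.Adj a1 a2 ∧ G.Adj b1 b2 ∧ ¬ G.Adj a1 b2 ∧ ¬ G.Adj b1 a2

/-- `G[X]` is a chordless path with one end in `A`, the other end in `B`,
and interior in `X \ (A ∪ B)`. -/
def IsPathSide {V : Type*} (G : SimpleGraph V) (X A B : Set V) : Prop :=
  ∃ (k : ℕ) (f : Fin (k+1) → V), Function.Injective f ∧
    X = Set.range f ∧ f 0 ∈ A ∧ f (Fin.last k) ∈ B ∧
    (∀ i : Fin (k+1), i ≠ 0 → i ≠ Fin.last k → f i ∉ A ∪ B) ∧
    (∀ i j : Fin (k+1), G.Adj (f i) (f j) ↔ ((i : ℕ) + 1 = (j : ℕ) ∨ (j : ℕ) + 1 = (i : ℕ)))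

/-- `(X1, X2)` is a path 2-join of `G`: it has a split one of whose sides is a path-side. -/
def IsPathTwoJoin {V : Type*} (G : SimpleGraph V) (X1 X2 : Set V) : Prop :=
  ∃ A1 B1 A2 B2, IsTwoJoinSplit G X1 X2 A1 B1 A2 B2 ∧
    (IsPathSide G X1 A1 B1 ∨ IsPathSide G X2 A2 B2)

/-- A non-path 2-join is a 2-join that is not a path 2-join. -/
def IsNonPathTwoJoin {V : Type*} (G : SimpleGraph V) (X1 X2 : Set V) : Prop :=
  IsTwoJoin G X1 X2 ∧ ¬ IsPathTwoJoin G X1 X2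

/-- `T` is a spanning tree of `G`. -/
def IsSpanningTree {V : Type*} (G T : SimpleGraph V) : Prop := T ≤ G ∧ T.IsTree

/-- `(T, r)` is a BFS-tree of `G`: a spanning tree in which distances from `r`
agree with distances in `G`. -/
def IsBFSTree {V : Type*} (G T : SimpleGraph V) (r : V) : Prop :=
  IsSpanningTree G T ∧ ∀ v, T.dist r v = G.dist r v


lemma walk_support_get? {V : Type*} {T : SimpleGraph V} {x y : V} (W : T.Walk x y) :
    ∀ j, j ≤ W.length → W.support[j]? = some (W.getVert j) := by
  induction W with
  | nil => intro j hj; simp at hj; subst hj; simp [SimpleGraph.Walk.getVert]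
  | cons h p ih =>
    intro j hj
    cases j with
    | zero => simp [SimpleGraph.Walk.getVert]
    | succ n =>
      rw [SimpleGraph.Walk.support_cons, SimpleGraph.Walk.getVert_cons_succ]
      simpa using ih n (by simpa using hj)

lemma walk_get?_some {V : Type*} {T : SimpleGraph V} {x y z : V} {W : T.Walk x y} {j : ℕ}
    (h : W.support[j]? = some z) : j ≤ W.length ∧ W.getVert j = z := by
  have hl : j < W.support.length := by
    by_contra hc
    rw [List.getElem?_eq_none (le_of_not_gt hc)] at h
    exact Option.noConfusion rfl (heq_of_eq h)
  rw [SimpleGraph.Walk.length_support] at hl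
  have hj : j ≤ W.length := by omega
  refine ⟨hj, ?_⟩
  have := walk_support_get? W j hj
  rw [this] at h
  exact Option.some_injective _ h.symm |>.symm

lemma dist_index {V : Type*} {T : SimpleGraph V} (ht : T.IsTree) {r v : V} (W : T.Walk r v)
    (hW : W.IsPath) {j : ℕ} (hj : j ≤ W.length) : T.dist r (W.getVert j) = j := by
  classical
  set x := W.getVert j with hxdef
  have hx : x ∈ W.support := SimpleGraph.Walk.mem_support_iff_exists_getVert.2 ⟨j, rfl, hj⟩
  set t := W.takeUntil x hx with htdef
  have htp : t.IsPath := hW.takeUntil hx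
  obtain ⟨p, hp, hpl⟩ := ht.isConnected.exists_path_of_dist r x
  have hdt : T.dist r x = t.length := by
    have heq : (⟨p, hp⟩ : T.Path r x) = ⟨t, htp⟩ := ht.IsAcyclic.path_unique _ _
    rw [← hpl]
    exact congrArg (fun q : T.Path r x => q.1.length) heq
  have hsup : W.support = t.support ++ (W.dropUntil x hx).support.tail := by
    conv_lhs => rw [← W.take_spec hx]
    rw [SimpleGraph.Walk.support_append]
  have h1 : W.support[t.length]? = some x := by
    rw [hsup, List.getElem?_append_left (by rw [SimpleGraph.Walk.length_support]; omega)]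
    have := walk_support_get? t t.length le_rfl
    rwa [SimpleGraph.Walk.getVert_length] at this
  have h2 : W.support[j]? = some x := walk_support_get? W j hj
  have hlt : t.length < W.support.length := by
    rw [SimpleGraph.Walk.length_support]
    exact Nat.lt_succ_of_le (W.length_takeUntil_le hx)
  have := (List.getElem?_inj hlt hW.support_nodup).1 (h1.trans h2.symm)
  rw [hdt, this]

lemma crossing {V : Type*} {T : SimpleGraph V} {X Y : Set V} (huniv : X ∪ Y = Set.univ)
    (hd : Disjoint X Y) {r v : V} (W : T.Walk r v) {s : ℕ} (hs : s ≤ W.length)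
    (h1 : W.getVert s ∈ X) (h2 : v ∈ Y) :
    ∃ j, s ≤ j ∧ j < W.length ∧ W.getVert j ∈ X ∧ W.getVert (j + 1) ∈ Y := by
  classical
  have hXY : ∀ z : V, z ∉ Y → z ∈ X := by
    intro z hz
    have : z ∈ X ∪ Y := huniv ▸ Set.mem_univ z
    rcases this with h | h
    · exact h
    · exact absurd h hz
  have hwit : W.getVert (s + (W.length - s)) ∈ Y := by
    rwa [Nat.add_sub_cancel' hs, W.getVert_length]
  have hex : ∃ m, W.getVert (s + m) ∈ Y := ⟨W.length - s, hwit⟩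
  set m := Nat.find hex with hm
  have hmY : W.getVert (s + m) ∈ Y := Nat.find_spec hex
  have hm0 : m ≠ 0 := by
    intro h
    rw [h, Nat.add_zero] at hmY
    exact Set.disjoint_left.mp hd h1 hmY
  have hmle : m ≤ W.length - s := Nat.find_min' hex hwit
  refine ⟨s + (m - 1), Nat.le_add_right _ _, by omega, ?_, ?_⟩
  · exact hXY _ (Nat.find_min hex (by omega))
  · have : s + (m - 1) + 1 = s + m := by omega
    rwa [this]

theorem stmt_6 {V : Type*} (G T : SimpleGraph V) (r : V) (hG : G.Connected)
    (hT : IsBFSTree G T r) (X1 X2 A1 B1 A2 B2 : Set V)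
    (hsplit : IsTwoJoinSplit G X1 X2 A1 B1 A2 B2) (hr : r ∈ X2)
    (hnoedge : ∀ u v, T.Adj u v → ¬ (u ∈ A1 ∧ v ∈ A2))
    (a : V) (ha : a ∈ A1) (P : T.Walk r a) (hP : P.IsPath)
    (b2 b1 u : V) (hb2 : b2 ∈ B2) (hb1 : b1 ∈ B1)
    (i : ℕ) (hi2 : P.support[i]? = some b2) (hi1 : P.support[i + 1]? = some b1)
    (hiu : P.support[i + 2]? = some u) :
    ∀ (v : V) (Q : T.Walk r v), Q.IsPath → u ∈ Q.support → v ∈ X1 := by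
  classical
  obtain ⟨⟨hTG, hTtree⟩, hdist⟩ := hT
  obtain ⟨huniv, hdisj, hA1, hB1, hA2, hB2, hdAB1, hdAB2, -, -, -, -, hAA, hBB, hXadj, -, -⟩ :=
    hsplit
  obtain ⟨hi2len, hi2v⟩ := walk_get?_some hi2
  obtain ⟨hi1len, hi1v⟩ := walk_get?_some hi1
  obtain ⟨hiulen, hiuv⟩ := walk_get?_some hiu
  have hmemX : ∀ z : V, z ∉ X1 → z ∈ X2 := by
    intro z hz
    have : z ∈ X1 ∪ X2 := huniv ▸ Set.mem_univ z
    rcases this with h | h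
    · exact absurd h hz
    · exact h
  -- distances of b2, b1, u
  have hdb2 : G.dist r b2 = i := by
    rw [← hdist, ← hi2v]; exact dist_index hTtree P hP hi2len
  have hdb1 : G.dist r b1 = i + 1 := by
    rw [← hdist, ← hi1v]; exact dist_index hTtree P hP hi1len
  have hdu : T.dist r u = i + 2 := by
    rw [← hiuv]; exact dist_index hTtree P hP hiulen
  -- an upper bound on distances to B1 / B2 neighbours
  have hub : ∀ w x : V, G.Adj w x → ∀ n, G.dist r w = n → G.dist r x ≤ n + 1 := by
    intro w x hadj n hn
    obtain ⟨p, -, hpl⟩ := hG.exists_path_of_dist r w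
    have := G.dist_le (p.concat hadj)
    rwa [SimpleGraph.Walk.length_concat, hpl, hn] at this
  -- Step 1 : u ∈ X1
  have huX1 : u ∈ X1 := by
    by_contra huc
    have huX2 : u ∈ X2 := hmemX u huc
    obtain ⟨j, hjs, hjlt, hjY, hjX⟩ := crossing (by rwa [Set.union_comm]) hdisj.symm P hiulen
      (by rwa [hiuv]) (hA1 ha)
    have hTadj : T.Adj (P.getVert (j + 1)) (P.getVert j) := (P.adj_getVert_succ hjlt).symm
    rcases hXadj _ hjX _ hjY (hTG hTadj) with ⟨hxA, hyA⟩ | ⟨hxB, hyB⟩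
    · exact hnoedge _ _ hTadj ⟨hxA, hyA⟩
    · have hdl : G.dist r (P.getVert (j + 1)) = j + 1 := by
        rw [← hdist]; exact dist_index hTtree P hP (by omega)
      have := hub b2 (P.getVert (j + 1)) ((hBB _ hxB _ hb2).symm) i hdb2
      omega
  -- Step 2 : all descendants of u are in X1
  intro v Q hQ huQ
  by_contra hvc
  have hvX2 : v ∈ X2 := hmemX v hvc
  obtain ⟨t, ht⟩ := List.mem_iff_getElem?.1 huQ
  obtain ⟨htlen, htv⟩ := walk_get?_some ht
  have htu : t = i + 2 := by
    rw [← hdu, ← htv]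
    exact (dist_index hTtree Q hQ htlen).symm
  obtain ⟨j, hjs, hjlt, hjX, hjY⟩ := crossing huniv hdisj Q htlen (by rwa [htv]) hvX2
  have hTadj : T.Adj (Q.getVert j) (Q.getVert (j + 1)) := Q.adj_getVert_succ hjlt
  rcases hXadj _ hjX _ hjY (hTG hTadj) with ⟨hxA, hyA⟩ | ⟨hxB, hyB⟩
  · exact hnoedge _ _ hTadj ⟨hxA, hyA⟩
  · have hdl : G.dist r (Q.getVert (j + 1)) = j + 1 := by
      rw [← hdist]; exact dist_index hTtree Q hQ (by omega)
    have := hub b1 (Q.getVert (j + 1)) (hBB _ hb1 _ hyB) (i + 1) hdb1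
    omega
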